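/- Fix n ≥ 1 and β > 0. The mellowmax operator mm_β : ℝⁿ → ℝ defined by mm_β(x) = (1/β)·log((1/n)·Σ_{i=1}^n e^{β·xᵢ}) is a non-expansion with respect to the supremum norm: |mm_β(x) − mm_β(y)| ≤ ‖x − y‖_∞ for all x, y ∈ ℝⁿ. (Lemma 4, part 2 of the paper.) -/

import Mathlib

lemma mm_one_side (n : ℕ) (hn : 1 ≤ n) (β : ℝ) (hβ : 0 < β)
    (x y : Fin n → ℝ) (c : ℝ) (hc : ∀ i, x i ≤ y i + c) :
    (1 / β) * Real.log ((1 / n) * ∑ i, Real.exp (β * x i)) -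
     (1 / β) * Real.log ((1 / n) * ∑ i, Real.exp (β * y i)) ≤ c := by
  have hn0 : (0:ℝ) < n := by exact_mod_cast hn
  have hSx : (0:ℝ) < ∑ i, Real.exp (β * x i) := by
    apply Finset.sum_pos (fun i _ => Real.exp_pos _)
    simpa [Finset.univ_nonempty_iff, ← Fin.pos_iff_nonempty] using (show 0 < n by omega)
  have hSy : (0:ℝ) < ∑ i, Real.exp (β * y i) := by
    apply Finset.sum_pos (fun i _ => Real.exp_pos _)
    simpa [Finset.univ_nonempty_iff, ← Fin.pos_iff_nonempty] using (show 0 < n by omega)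
  have hle : ∑ i, Real.exp (β * x i) ≤ (∑ i, Real.exp (β * y i)) * Real.exp (β * c) := by
    rw [Finset.sum_mul]
    apply Finset.sum_le_sum
    intro i _
    rw [← Real.exp_add]
    apply Real.exp_le_exp.2
    have := hc i
    nlinarith
  have hlog : Real.log (∑ i, Real.exp (β * x i)) - Real.log (∑ i, Real.exp (β * y i)) ≤ β * c := by
    have := Real.log_le_log hSx hle
    rw [Real.log_mul hSy.ne' (Real.exp_pos _).ne', Real.log_exp] at this
    linarith
  have h1 : Real.log ((1 / n) * ∑ i, Real.exp (β * x i))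
      = Real.log (1 / n) + Real.log (∑ i, Real.exp (β * x i)) :=
    Real.log_mul (by positivity) hSx.ne'
  have h2 : Real.log ((1 / n) * ∑ i, Real.exp (β * y i))
      = Real.log (1 / n) + Real.log (∑ i, Real.exp (β * y i)) :=
    Real.log_mul (by positivity) hSy.ne'
  rw [h1, h2, ← mul_sub]
  have : Real.log (1 / n) + Real.log (∑ i, Real.exp (β * x i)) -
      (Real.log (1 / n) + Real.log (∑ i, Real.exp (β * y i)))
      = Real.log (∑ i, Real.exp (β * x i)) - Real.log (∑ i, Real.exp (β * y i)) := by ring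
  rw [this]
  calc (1 / β) * (Real.log (∑ i, Real.exp (β * x i)) - Real.log (∑ i, Real.exp (β * y i)))
      ≤ (1 / β) * (β * c) := by
        apply mul_le_mul_of_nonneg_left hlog (by positivity)
    _ = c := by field_simp

/-- **Lemma 4, part 2.** The mellowmax operator
`mm_β(x) = (1/β)·log((1/n)·Σᵢ exp(β·xᵢ))` is a non-expansion in the supremum norm. -/
theorem mellowmax_nonexpansion (n : ℕ) (hn : 1 ≤ n) (β : ℝ) (hβ : 0 < β)
    (x y : Fin n → ℝ) :
    |(1 / β) * Real.log ((1 / n) * ∑ i, Real.exp (β * x i)) -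
     (1 / β) * Real.log ((1 / n) * ∑ i, Real.exp (β * y i))| ≤ ‖x - y‖ := by
  have key : ∀ i, |x i - y i| ≤ ‖x - y‖ := by
    intro i
    calc |x i - y i| = ‖(x - y) i‖ := by simp [Real.norm_eq_abs]
      _ ≤ ‖x - y‖ := norm_le_pi_norm _ i
  rw [abs_sub_le_iff]
  constructor
  · exact mm_one_side n hn β hβ x y _ (fun i => by
      have := key i; rw [abs_le] at this; linarith [this.2])
  · exact mm_one_side n hn β hβ y x _ (fun i => by
      have := key i; rw [abs_le] at this; linarith [this.1])
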